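/- Let ρ : (Fin d → ℝ) → ℝ be a probability density with respect to d-dimensional Lebesgue measure, and for each i : Fin d let ρᵢ : ℝ → ℝ be a nonnegative measurable function such that the pushforward of the measure volume.withDensity ρ under the coordinate map x ↦ x i equals volume.withDensity ρᵢ on ℝ (ρᵢ is the i-th marginal density of ρ). Assume x ↦ ρ(x) * Real.log (ρ(x)) and t ↦ ρᵢ(t) * Real.log (ρᵢ(t)) are integrable for each i, and that ρᵢ(x i) > 0 for (volume.withDensity ρ)-almost every x. Then the differential Shannon entropies satisfy −∫ ρ * Real.log ρ ≤ ∑ i, (−∫ ρᵢ * Real.log ρᵢ). (This is Theorem 5.3 of the paper, the full chain rule / subadditivity of differential entropy: H(ρ(x₁,…,x_d)) ≤ ∑ᵢ H(ρ(xᵢ)).) -/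

import Mathlib

open MeasureTheory
open scoped ENNReal NNReal

lemma myaux_integral {α : Type*} [MeasurableSpace α] (ν : Measure α)
    (f : α → ℝ) (hf : Measurable f) (hf0 : ∀ x, 0 ≤ f x) (g : α → ℝ) :
    ∫ x, g x ∂(ν.withDensity fun x => ENNReal.ofReal (f x)) = ∫ x, f x * g x ∂ν := by
  have h : (fun x => ENNReal.ofReal (f x)) = fun x => ((f x).toNNReal : ℝ≥0∞) := rfl
  rw [h, integral_withDensity_eq_integral_smul hf.real_toNNReal]
  refine integral_congr_ae (Filter.Eventually.of_forall fun x => ?_)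
  simp [NNReal.smul_def, Real.coe_toNNReal _ (hf0 x)]

lemma myaux_integrable {α : Type*} [MeasurableSpace α] (ν : Measure α)
    (f : α → ℝ) (hf : Measurable f) (hf0 : ∀ x, 0 ≤ f x) (g : α → ℝ) :
    Integrable g (ν.withDensity fun x => ENNReal.ofReal (f x))
      ↔ Integrable (fun x => f x * g x) ν := by
  have h : (fun x => ENNReal.ofReal (f x)) = fun x => ((f x).toNNReal : ℝ≥0∞) := rfl
  rw [h, integrable_withDensity_iff_integrable_smul hf.real_toNNReal]
  constructor <;> intro H <;> refine H.congr (Filter.Eventually.of_forall fun x => ?_) <;>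
    simp [NNReal.smul_def, Real.coe_toNNReal _ (hf0 x)]

/-- Theorem 5.3, subadditivity of differential entropy:
`H(ρ(x₁,…,x_d)) ≤ ∑ᵢ H(ρᵢ)` where `ρᵢ` is the `i`-th marginal density of `ρ`. -/
theorem entropy_subadditive (d : ℕ)
    (ρ : (Fin d → ℝ) → ℝ) (hρ0 : ∀ x, 0 ≤ ρ x) (hρm : Measurable ρ)
    (hρi : Integrable ρ) (hρ1 : ∫ x : Fin d → ℝ, ρ x = 1)
    (ρmarg : Fin d → ℝ → ℝ)
    (hm0 : ∀ i t, 0 ≤ ρmarg i t) (hmm : ∀ i, Measurable (ρmarg i))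
    (hmarg : ∀ i : Fin d,
      (volume.withDensity (fun x : Fin d → ℝ => ENNReal.ofReal (ρ x))).map
          (fun x : Fin d → ℝ => x i)
        = volume.withDensity (fun t : ℝ => ENNReal.ofReal (ρmarg i t)))
    (hlog : Integrable (fun x : Fin d → ℝ => ρ x * Real.log (ρ x)))
    (hlogm : ∀ i, Integrable (fun t : ℝ => ρmarg i t * Real.log (ρmarg i t)))
    (hpos : ∀ i : Fin d,
      ∀ᵐ x : Fin d → ℝ
        ∂(volume.withDensity (fun x : Fin d → ℝ => ENNReal.ofReal (ρ x))),
        0 < ρmarg i (x i)) :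
    -∫ x : Fin d → ℝ, ρ x * Real.log (ρ x)
      ≤ ∑ i : Fin d, -∫ t : ℝ, ρmarg i t * Real.log (ρmarg i t) := by
  set μ : Measure (Fin d → ℝ) :=
    volume.withDensity (fun x : Fin d → ℝ => ENNReal.ofReal (ρ x)) with hμdef
  -- μ is a probability measure
  have hμprob : IsProbabilityMeasure μ := by
    constructor
    rw [hμdef, withDensity_apply _ MeasurableSet.univ, setLIntegral_univ,
      ← ofReal_integral_eq_lintegral_ofReal hρi (Filter.Eventually.of_forall hρ0), hρ1,
      ENNReal.ofReal_one]
  -- marginal measures are probability measures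
  have hmargprob : ∀ i, IsProbabilityMeasure
      (volume.withDensity (fun t : ℝ => ENNReal.ofReal (ρmarg i t))) := by
    intro i
    rw [← hmarg i]
    exact Measure.isProbabilityMeasure_map (measurable_pi_apply i).aemeasurable
  -- each marginal is integrable with integral one
  have hmint : ∀ i, Integrable (ρmarg i) := by
    intro i
    refine ⟨(hmm i).aestronglyMeasurable, ?_⟩
    have h1 : ∫⁻ t, ENNReal.ofReal (ρmarg i t) = 1 := by
      have := (hmargprob i).measure_univ
      rwa [withDensity_apply _ MeasurableSet.univ, setLIntegral_univ] at this
    rw [hasFiniteIntegral_iff_norm]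
    calc ∫⁻ t, ENNReal.ofReal ‖ρmarg i t‖ = ∫⁻ t, ENNReal.ofReal (ρmarg i t) := by
          refine lintegral_congr fun t => ?_
          rw [Real.norm_eq_abs, abs_of_nonneg (hm0 i t)]
      _ = 1 := h1
      _ < ⊤ := ENNReal.one_lt_top
  have hm1 : ∀ i, ∫ t, ρmarg i t = 1 := by
    intro i
    have h1 : ∫⁻ t, ENNReal.ofReal (ρmarg i t) = 1 := by
      have := (hmargprob i).measure_univ
      rwa [withDensity_apply _ MeasurableSet.univ, setLIntegral_univ] at this
    have := ofReal_integral_eq_lintegral_ofReal (hmint i)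
      (Filter.Eventually.of_forall (hm0 i))
    rw [h1] at this
    exact ENNReal.ofReal_eq_one.mp this
  -- the product of marginals
  set q : (Fin d → ℝ) → ℝ := fun x => ∏ i, ρmarg i (x i) with hqdef
  have hqm : Measurable q :=
    Finset.measurable_prod _ fun i _ => (hmm i).comp (measurable_pi_apply i)
  have hq0 : ∀ x, 0 ≤ q x := fun x => Finset.prod_nonneg fun i _ => hm0 i (x i)
  have hqint : Integrable q := Integrable.fintype_prod fun i => hmint i
  have hqone : ∫ x, q x = 1 := by
    rw [hqdef]
    beta_reduce
    rw [volume_pi, integral_fintype_prod_eq_prod (ι := Fin d) fun i => ρmarg i]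
    simp [hm1]
  -- a.e. positivity
  have hρpos : ∀ᵐ x ∂μ, 0 < ρ x := by
    rw [hμdef, ae_iff]
    have hset : {x : Fin d → ℝ | ¬ 0 < ρ x} = {x | ρ x ≤ 0} := by
      ext x; simp [not_lt]
    have hz : ∫⁻ x in {x : Fin d → ℝ | ρ x ≤ 0}, ENNReal.ofReal (ρ x)
        = ∫⁻ _x in {x : Fin d → ℝ | ρ x ≤ 0}, (0 : ℝ≥0∞) :=
      setLIntegral_congr_fun (measurableSet_le hρm measurable_const)
        (fun x hx => ENNReal.ofReal_eq_zero.mpr hx)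
    rw [hset, withDensity_apply _ (measurableSet_le hρm measurable_const), hz]
    simp
  have hqpos : ∀ᵐ x ∂μ, 0 < q x := by
    have h := (Filter.eventually_all (ι := Fin d)).2 hpos
    filter_upwards [h] with x hx
    exact Finset.prod_pos fun i _ => hx i
  -- integrability transfers
  have Ilogρ : Integrable (fun x => Real.log (ρ x)) μ :=
    (myaux_integrable volume ρ hρm hρ0 _).mpr hlog
  have Ilogm : ∀ i, Integrable (fun x : Fin d → ℝ => Real.log (ρmarg i (x i))) μ := by
    intro i
    have h1 : Integrable (fun t => Real.log (ρmarg i t))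
        (volume.withDensity (fun t : ℝ => ENNReal.ofReal (ρmarg i t))) :=
      (myaux_integrable volume (ρmarg i) (hmm i) (hm0 i) _).mpr (hlogm i)
    rw [← hmarg i] at h1
    exact (integrable_map_measure
      ((Real.measurable_log.comp (hmm i)).aestronglyMeasurable)
      (measurable_pi_apply i).aemeasurable).mp h1
  have Iqρvol : Integrable (fun x => ρ x * (q x / ρ x)) := by
    refine Integrable.mono' hqint
      ((hρm.mul (hqm.div hρm)).aestronglyMeasurable)
      (Filter.Eventually.of_forall fun x => ?_)
    rw [Real.norm_eq_abs]
    rcases eq_or_lt_of_le (hρ0 x) with h | h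
    · simp [← h, hq0 x]
    · rw [mul_div_cancel₀ _ (ne_of_gt h), abs_of_nonneg (hq0 x)]
  have Iqρ : Integrable (fun x => q x / ρ x) μ :=
    (myaux_integrable volume ρ hρm hρ0 _).mpr Iqρvol
  -- integral identities
  have hA : ∫ x, Real.log (ρ x) ∂μ = ∫ x, ρ x * Real.log (ρ x) :=
    myaux_integral volume ρ hρm hρ0 _
  have hB : ∀ i, ∫ x, Real.log (ρmarg i (x i)) ∂μ
      = ∫ t, ρmarg i t * Real.log (ρmarg i t) := by
    intro i
    rw [← myaux_integral volume (ρmarg i) (hmm i) (hm0 i) (fun t => Real.log (ρmarg i t)),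
      ← hmarg i, integral_map (measurable_pi_apply i).aemeasurable
        ((Real.measurable_log.comp (hmm i)).aestronglyMeasurable)]
  have hC : ∫ x, q x / ρ x ∂μ ≤ 1 := by
    rw [myaux_integral volume ρ hρm hρ0 _, ← hqone]
    refine integral_mono Iqρvol hqint fun x => ?_
    rcases eq_or_lt_of_le (hρ0 x) with h | h
    · simp [← h, hq0 x]
    · rw [mul_div_cancel₀ _ (ne_of_gt h)]
  -- pointwise Gibbs inequality a.e.
  have hgibbs : ∀ᵐ x ∂μ,
      (∑ i, Real.log (ρmarg i (x i))) - Real.log (ρ x) ≤ q x / ρ x - 1 := by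
    filter_upwards [hρpos, hqpos, (Filter.eventually_all (ι := Fin d)).2 hpos]
      with x hρx hqx hmx
    have h1 : (∑ i, Real.log (ρmarg i (x i))) = Real.log (q x) := by
      rw [hqdef]
      exact (Real.log_prod fun i _ => ne_of_gt (hmx i)).symm
    rw [h1, ← Real.log_div (ne_of_gt hqx) (ne_of_gt hρx)]
    exact Real.log_le_sub_one_of_pos (div_pos hqx hρx)
  -- integrate the Gibbs bound
  have Isum : Integrable (fun x => ∑ i, Real.log (ρmarg i (x i))) μ :=
    integrable_finset_sum _ fun i _ => Ilogm i
  have key : (∑ i, ∫ t, ρmarg i t * Real.log (ρmarg i t))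
      - ∫ x, ρ x * Real.log (ρ x) ≤ 0 := by
    have h1 : (∑ i, ∫ t, ρmarg i t * Real.log (ρmarg i t))
        - ∫ x, ρ x * Real.log (ρ x)
        = ∫ x, ((∑ i, Real.log (ρmarg i (x i))) - Real.log (ρ x)) ∂μ := by
      rw [integral_sub Isum Ilogρ, integral_finset_sum _ fun i _ => Ilogm i, hA]
      simp [hB]
    have h2 : ∫ x, ((∑ i, Real.log (ρmarg i (x i))) - Real.log (ρ x)) ∂μ
        ≤ ∫ x, (q x / ρ x - 1) ∂μ :=
      integral_mono_ae (Isum.sub Ilogρ) (Iqρ.sub (integrable_const 1)) hgibbs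
    have h3 : ∫ x, (q x / ρ x - 1) ∂μ ≤ 0 := by
      rw [integral_sub Iqρ (integrable_const 1), integral_const]
      simp only [measure_univ, probReal_univ, ENNReal.toReal_one, smul_eq_mul, one_mul]
      linarith
    linarith
  have hsum : ∑ i : Fin d, -∫ t : ℝ, ρmarg i t * Real.log (ρmarg i t)
      = -∑ i : Fin d, ∫ t : ℝ, ρmarg i t * Real.log (ρmarg i t) := by
    rw [Finset.sum_neg_distrib]
  rw [hsum]
  linarith
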